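/- In the group W(K), the difference P₁₂ − P₃₁ equals Q₀′ or −Q₀′, where Q₀′ is the K-point with coordinates (5t² − 32t + 48, 10t³ − 114t² + 392t − 408). (The x-coordinate of Q₀′ gives the second weak contact conic C₃′ : x = 5t² − 32t + 48 of C₁+C₂.) -/

import Mathlib

open WeierstrassCurve.Affine (Point)

noncomputable section

/-- `K = ℂ(t)`, the field of rational functions in one variable over `ℂ`. -/
abbrev K : Type := RatFunc ℂ

/-- The variable `t` of `K = ℂ(t)`. -/
def t : K := RatFunc.X

/-- The elliptic curve `W : y² = (x - t²)(x² - 10tx + 25x - 36)`, i.e.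
`y² = x³ + (25 - 10t - t²)x² + (10t³ - 25t² - 36)x + 36t²`, over `K`. -/
def W : WeierstrassCurve.Affine K where
  a₁ := 0
  a₂ := 25 - 10 * t - t ^ 2
  a₃ := 0
  a₄ := 10 * t ^ 3 - 25 * t ^ 2 - 36
  a₆ := 36 * t ^ 2

/-- Coordinates of the point `P₁₂` coming from the line `L₁₂ : x = 5t - 6`. -/
def xP12 : K := 5 * t - 6
def yP12 : K := -(5 * (t - 2) * (t - 3))

/-- Coordinates of the point `P₂₃` coming from the line `L₂₃ : x = 8t - 12`. -/
def xP23 : K := 8 * t - 12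
def yP23 : K := -(4 * (t - 2) * (t - 6))

/-- Coordinates of the point `P₃₁` coming from the line `L₃₁ : x = 9t - 18`. -/
def xP31 : K := 9 * t - 18
def yP31 : K := -(3 * (t - 3) * (t - 6))



lemma some_congr {F : Type} [Field F] {W' : WeierstrassCurve.Affine F} {x1 y1 x2 y2 : F}
    {h1 : W'.Nonsingular x1 y1} {h2 : W'.Nonsingular x2 y2} (hx : x1 = x2) (hy : y1 = y2) :
    Point.some _ _ h1 = Point.some _ _ h2 := by subst hx; subst hy; rfl

lemma const_ne (c : ℂ) (hc : c ≠ 0) : algebraMap ℂ K c ≠ 0 :=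
  (map_ne_zero_iff (algebraMap ℂ K) (algebraMap ℂ K).injective).mpr hc

lemma two_ne : (2 : K) ≠ 0 := by
  have := const_ne 2 (by norm_num); rwa [map_ofNat] at this
lemma five_ne : (5 : K) ≠ 0 := by
  have := const_ne 5 (by norm_num); rwa [map_ofNat] at this
lemma three_ne : (3 : K) ≠ 0 := by
  have := const_ne 3 (by norm_num); rwa [map_ofNat] at this
lemma four_ne : (4 : K) ≠ 0 := by
  have := const_ne 4 (by norm_num); rwa [map_ofNat] at this
lemma ten_ne : (10 : K) ≠ 0 := by
  have := const_ne 10 (by norm_num); rwa [map_ofNat] at this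

lemma t_sub_ne (c : ℂ) : t - algebraMap ℂ K c ≠ 0 := by
  have : t - algebraMap ℂ K c = algebraMap (Polynomial ℂ) K (Polynomial.X - Polynomial.C c) := by
    rw [map_sub, RatFunc.algebraMap_X, RatFunc.algebraMap_C]; rfl
  rw [this, map_ne_zero_iff _ (IsFractionRing.injective _ _)]
  exact Polynomial.X_sub_C_ne_zero c

lemma t2 : t - 2 ≠ 0 := by have := t_sub_ne 2; rwa [map_ofNat] at this
lemma t3 : t - 3 ≠ 0 := by have := t_sub_ne 3; rwa [map_ofNat] at this
lemma t6 : t - 6 ≠ 0 := by have := t_sub_ne 6; rwa [map_ofNat] at this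
lemma t5m17 : 5 * t - 17 ≠ 0 := by
  intro h
  apply t_sub_ne (17/5)
  have h175 : algebraMap ℂ K (17/5) = 17/5 := by
    rw [map_div₀, map_ofNat, map_ofNat]
  rw [h175]
  have h5 := five_ne
  field_simp
  linear_combination h

open Classical in
/-- `P₁₂ - P₃₁ = ±Q₀′` where `Q₀′ = (5t² - 32t + 48, 10t³ - 114t² + 392t - 408)`
(whose `x`-coordinate gives the second weak contact conic `C₃′`). -/
theorem P12_sub_P31_eq_Q0' :
    ∃ (h12 : W.Nonsingular xP12 yP12) (h31 : W.Nonsingular xP31 yP31)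
      (hQ0' : W.Nonsingular (5 * t ^ 2 - 32 * t + 48)
        (10 * t ^ 3 - 114 * t ^ 2 + 392 * t - 408)),
      Point.some _ _ h12 - Point.some _ _ h31 = Point.some _ _ hQ0' ∨
      Point.some _ _ h12 - Point.some _ _ h31 = -Point.some _ _ hQ0' := by
  have h12 : W.Nonsingular xP12 yP12 := by
    rw [WeierstrassCurve.Affine.nonsingular_iff, WeierstrassCurve.Affine.equation_iff]
    refine ⟨by simp only [W, xP12, yP12]; ring, Or.inr ?_⟩
    simp only [W, xP12, yP12]
    intro h
    have h0 : (2 : K) * (5 * (t - 2) * (t - 3)) = 0 := by linear_combination -h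
    rcases mul_eq_zero.mp h0 with h' | h'
    · exact two_ne h'
    rcases mul_eq_zero.mp h' with h' | h'
    · rcases mul_eq_zero.mp h' with h'' | h''
      · exact five_ne h''
      · exact t2 h''
    · exact t3 h'
  have h31 : W.Nonsingular xP31 yP31 := by
    rw [WeierstrassCurve.Affine.nonsingular_iff, WeierstrassCurve.Affine.equation_iff]
    refine ⟨by simp only [W, xP31, yP31]; ring, Or.inr ?_⟩
    simp only [W, xP31, yP31]
    intro h
    have h0 : (2 : K) * (3 * (t - 3) * (t - 6)) = 0 := by linear_combination -h
    rcases mul_eq_zero.mp h0 with h' | h'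
    · exact two_ne h'
    rcases mul_eq_zero.mp h' with h' | h'
    · rcases mul_eq_zero.mp h' with h'' | h''
      · exact three_ne h''
      · exact t3 h''
    · exact t6 h'
  have hQ : W.Nonsingular (5 * t ^ 2 - 32 * t + 48)
      (10 * t ^ 3 - 114 * t ^ 2 + 392 * t - 408) := by
    rw [WeierstrassCurve.Affine.nonsingular_iff, WeierstrassCurve.Affine.equation_iff]
    refine ⟨by simp only [W]; ring, Or.inr ?_⟩
    simp only [W]
    intro h
    have h0 : (2 : K) * (2 * (t - 2) * ((t - 6) * (5 * t - 17))) = 0 := by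
      linear_combination h
    rcases mul_eq_zero.mp h0 with h' | h'
    · exact two_ne h'
    rcases mul_eq_zero.mp h' with h' | h'
    · rcases mul_eq_zero.mp h' with h'' | h''
      · exact two_ne h''
      · exact t2 h''
    · rcases mul_eq_zero.mp h' with h'' | h''
      · exact t6 h''
      · exact t5m17 h''
  refine ⟨h12, h31, hQ, Or.inr ?_⟩
  rw [sub_eq_add_neg, WeierstrassCurve.Affine.Point.neg_some]
  have hx : xP12 ≠ xP31 := by
    simp only [xP12, xP31]
    intro h
    have h0 : (4 : K) * (t - 3) = 0 := by linear_combination -h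
    rcases mul_eq_zero.mp h0 with h' | h'
    · exact four_ne h'
    · exact t3 h'
  have hd : xP12 - xP31 ≠ 0 := sub_ne_zero.mpr hx
  have hslope : W.slope xP12 xP31 yP12 (W.negY xP31 yP31) = 2 * t - 7 := by
    rw [WeierstrassCurve.Affine.slope_of_X_ne hx, div_eq_iff hd]
    simp only [W, xP12, yP12, xP31, yP31, WeierstrassCurve.Affine.negY]
    ring
  rw [WeierstrassCurve.Affine.Point.add_of_X_ne' hx]
  refine congrArg _ (some_congr ?_ ?_)
  · rw [WeierstrassCurve.Affine.addX, hslope]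
    simp only [W, xP12, xP31]
    ring
  · rw [WeierstrassCurve.Affine.negAddY, WeierstrassCurve.Affine.addX, hslope]
    simp only [W, xP12, yP12, xP31]
    ring

end
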